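/- (Stationary points of the perturbation function, boundary exclusion) Let γ ∈ (1/2, 1] and p ∈ ℝ with 0 ≤ p < γ². If t := √((γ-p)·√(γ²-p)/(2√(γ²-p) - |2γ-1|)) is real (i.e., 2√(γ²-p) > |2γ-1|, equivalently γ > p + 1/4) and satisfies t² < γ² - p, then 2γ - 1 < p < γ(2γ-1), which forces γ > 1 — a contradiction. Hence no such point exists with t² < γ² - p when γ ≤ 1. -/
import Mathlib


theorem stmt_17 (γ p : ℝ) (hγl : 1/2 < γ) (hγu : γ ≤ 1)
    (hp0 : 0 ≤ p) (hp : p < γ ^ 2)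
    (hreal : |2 * γ - 1| < 2 * Real.sqrt (γ ^ 2 - p)) :
    ¬ (Real.sqrt ((γ - p) * Real.sqrt (γ ^ 2 - p)
        / (2 * Real.sqrt (γ ^ 2 - p) - |2 * γ - 1|))) ^ 2 < γ ^ 2 - p := by
  intro h
  have h21 : 0 < 2 * γ - 1 := by linarith
  have habs : |2 * γ - 1| = 2 * γ - 1 := abs_of_pos h21
  rw [habs] at hreal h
  set s := Real.sqrt (γ ^ 2 - p) with hs
  have hs2 : s ^ 2 = γ ^ 2 - p := Real.sq_sqrt (by linarith)
  have hspos : 0 < s := Real.sqrt_pos.mpr (by linarith)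
  have hd : 0 < 2 * s - (2 * γ - 1) := by linarith
  have hγp : 0 < γ - p := by nlinarith
  have harg : 0 ≤ (γ - p) * s / (2 * s - (2 * γ - 1)) := by positivity
  rw [Real.sq_sqrt harg] at h
  have h1 : (γ - p) * s < (γ ^ 2 - p) * (2 * s - (2 * γ - 1)) := by
    rwa [div_lt_iff₀ hd] at h
  have h2 : (2 * γ - 1) * s < 2 * γ ^ 2 - γ - p := by nlinarith [hs2, hspos]
  have h3 : p < γ * (2 * γ - 1) := by nlinarith [mul_pos h21 hspos]
  have h4 : (2 * γ - 1) ^ 2 * (γ ^ 2 - p) < (2 * γ ^ 2 - γ - p) ^ 2 := by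
    nlinarith [mul_pos h21 hspos, hs2]
  have h5 : 2 * γ - 1 < p := by nlinarith
  nlinarith
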